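/- State-by-state decomposition of the dual function: For every λ ∈ ℝ, D(λ) = λ·N₂ + Σ_s f s · D_s(λ), where for each state s, D_s(λ) is the maximum of Σ_i v i · p s i · x_i + Σ_i (v i − λ) · y_i over all x, y : I → ℝ satisfying y_i ≤ p s i · (1 − x_i), Σ_i x_i ≤ N₁, 0 ≤ x_i ≤ 1, and y_i ≥ 0 for all i. -/

import Mathlib

open Finset

/-- Feasibility of a pair of scheduling variables `(x, y)`:
for all states `s` and packets `i`, `y s i ≤ p s i * (1 - x s i)`,
`∑ i, x s i ≤ N₁`, `0 ≤ x s i ≤ 1`, and `y s i ≥ 0`. -/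
def Feasible {S I : Type*} [Fintype S] [Fintype I]
    (p : S → I → ℝ) (N₁ : ℕ) (x y : S → I → ℝ) : Prop :=
  (∀ s i, y s i ≤ p s i * (1 - x s i)) ∧
  (∀ s, ∑ i, x s i ≤ (N₁ : ℝ)) ∧
  (∀ s i, 0 ≤ x s i ∧ x s i ≤ 1) ∧
  (∀ s i, 0 ≤ y s i)

/-- The Lagrangian `L(x, y, λ) = Q(x,y) - λ (∑_s f s ∑_i y s i - N₂)`. -/
def Lag {S I : Type*} [Fintype S] [Fintype I]
    (f : S → ℝ) (v : I → ℝ) (p : S → I → ℝ) (N₂ : ℕ)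
    (x y : S → I → ℝ) (lam : ℝ) : ℝ :=
  (∑ s, f s * ∑ i, v i * (x s i * p s i + y s i))
    - lam * ((∑ s, f s * ∑ i, y s i) - (N₂ : ℝ))

/-- State-by-state decomposition of the dual function:
`D(λ) = λ N₂ + ∑_s f s * D_s(λ)`, where `D_s(λ)` is the maximum of
`∑_i v i * p s i * x i + ∑_i (v i - λ) * y i` over the per-state feasible set. -/
lemma lag_decomp {S I : Type*} [Fintype S] [Fintype I]
    (f : S → ℝ) (v : I → ℝ) (p : S → I → ℝ) (N₂ : ℕ)
    (x y : S → I → ℝ) (lam : ℝ) :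
    Lag f v p N₂ x y lam
      = lam * (N₂ : ℝ)
        + ∑ s, f s * ((∑ i, v i * p s i * x s i) + ∑ i, (v i - lam) * y s i) := by
  unfold Lag
  have h1 : ∀ s : S,
      f s * ((∑ i, v i * p s i * x s i) + ∑ i, (v i - lam) * y s i)
        = f s * (∑ i, v i * (x s i * p s i + y s i)) - lam * (f s * ∑ i, y s i) := by
    intro s
    simp only [Finset.mul_sum, ← Finset.sum_sub_distrib, ← Finset.sum_add_distrib]
    exact Finset.sum_congr rfl fun i _ => by ring
  rw [Finset.sum_congr rfl fun s _ => h1 s, Finset.sum_sub_distrib,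
    ← Finset.mul_sum]
  ring

theorem dual_state_decomposition
    {S I : Type*} [Fintype S] [Fintype I]
    (f : S → ℝ) (v : I → ℝ) (p : S → I → ℝ) (N₁ N₂ : ℕ)
    (hf : ∀ s, 0 ≤ f s) (hfsum : ∑ s, f s = 1)
    (hv : ∀ i, 0 ≤ v i) (hp : ∀ s i, 0 ≤ p s i ∧ p s i ≤ 1)
    (D : ℝ → ℝ)
    (hD : ∀ lam : ℝ, IsGreatest
      {z : ℝ | ∃ x y : S → I → ℝ, Feasible p N₁ x y ∧ Lag f v p N₂ x y lam = z} (D lam))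
    (Ds : S → ℝ → ℝ)
    (hDs : ∀ (s : S) (lam : ℝ), IsGreatest
      {z : ℝ | ∃ x y : I → ℝ,
        (∀ i, y i ≤ p s i * (1 - x i)) ∧ (∑ i, x i ≤ (N₁ : ℝ)) ∧
        (∀ i, 0 ≤ x i ∧ x i ≤ 1) ∧ (∀ i, 0 ≤ y i) ∧
        (∑ i, v i * p s i * x i) + (∑ i, (v i - lam) * y i) = z} (Ds s lam)) :
    ∀ lam : ℝ, D lam = lam * (N₂ : ℝ) + ∑ s, f s * Ds s lam := by
  intro lam
  have key := lag_decomp f v p N₂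
  apply le_antisymm
  · -- D lam ≤ RHS
    obtain ⟨x, y, hfeas, hval⟩ := (hD lam).1
    rw [← hval, key x y lam]
    have hle : ∀ s : S,
        f s * ((∑ i, v i * p s i * x s i) + ∑ i, (v i - lam) * y s i)
          ≤ f s * Ds s lam := by
      intro s
      apply mul_le_mul_of_nonneg_left _ (hf s)
      exact (hDs s lam).2 ⟨x s, y s, fun i => hfeas.1 s i, hfeas.2.1 s,
        fun i => hfeas.2.2.1 s i, fun i => hfeas.2.2.2 s i, rfl⟩
    exact add_le_add le_rfl (Finset.sum_le_sum fun s _ => hle s)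
  · -- RHS ≤ D lam
    choose x y hy hx1 hx01 hy0 hval using fun s : S => (hDs s lam).1
    have : Lag f v p N₂ x y lam = lam * (N₂ : ℝ) + ∑ s, f s * Ds s lam := by
      rw [key x y lam]
      congr 1
      exact Finset.sum_congr rfl fun s _ => by rw [hval s]
    calc lam * (N₂ : ℝ) + ∑ s, f s * Ds s lam
        = Lag f v p N₂ x y lam := this.symm
      _ ≤ D lam := (hD lam).2 ⟨x, y, ⟨hy, hx1, hx01, hy0⟩, rfl⟩
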